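/- The matrix-valued rational function R(x) = Σ_{1≤i,j≤n} E_ii⊗E_jj ((q - xq^{-1})/(1-x))^{δ(i≡j)} + (q - q^{-1}) Σ_{1≤i≠j≤n} E_ij⊗E_ji x^{δ(i<j)}/(1-x) satisfies the Yang–Baxter equation with spectral parameters: R_{12}(z₁/z₂) R_{13}(z₁/z₃) R_{23}(z₂/z₃) = R_{23}(z₂/z₃) R_{13}(z₁/z₃) R_{12}(z₁/z₂) as an identity of End(V⊗V⊗V)-valued rational functions, where V = ℚ(q)ⁿ. -/
import Mathlib

set_option maxHeartbeats 1000000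



/-!
STATEMENT 0: The quantum affine gl_n R-matrix satisfies the Yang–Baxter equation
with spectral parameters, as an identity of End(V⊗V⊗V)-valued rational functions
(formalized pointwise, at every point of an arbitrary field where all the
denominators are nonzero; this is equivalent to the rational-function identity).
-/

open scoped Matrix

/-- The quantum affine `gl_n` R-matrix
`R(x) = Σ_{i,j} E_ii⊗E_jj ((q - xq⁻¹)/(1-x))^{δ(i≡j)}
      + (q - q⁻¹) Σ_{i≠j} E_ij⊗E_ji x^{δ(i<j)}/(1-x)`,
written as a matrix on `V ⊗ V` where `V = Kⁿ`, with rows/columns indexed by pairs.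
(The entry at `((i,j),(k,l))` is the coefficient of `E_ik ⊗ E_jl`.) -/
def Rm (n : ℕ) {K : Type*} [Field K] (q x : K) :
    Matrix (Fin n × Fin n) (Fin n × Fin n) K := fun p p' =>
  (if p = p' then (if p.1 = p.2 then (q - x * q⁻¹) / (1 - x) else 1) else 0) +
  (if p.1 ≠ p.2 ∧ p'.1 = p.2 ∧ p'.2 = p.1 then
    (q - q⁻¹) * (if p.1 < p.2 then x else 1) / (1 - x) else 0)

/-- Place an operator on `V ⊗ V` in the tensor factors 1,2 of `V ⊗ V ⊗ V`. -/
def emb12 {n : ℕ} {K : Type*} [Field K]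
    (M : Matrix (Fin n × Fin n) (Fin n × Fin n) K) :
    Matrix (Fin n × Fin n × Fin n) (Fin n × Fin n × Fin n) K := fun p p' =>
  M (p.1, p.2.1) (p'.1, p'.2.1) * (if p.2.2 = p'.2.2 then 1 else 0)

/-- Place an operator on `V ⊗ V` in the tensor factors 1,3 of `V ⊗ V ⊗ V`. -/
def emb13 {n : ℕ} {K : Type*} [Field K]
    (M : Matrix (Fin n × Fin n) (Fin n × Fin n) K) :
    Matrix (Fin n × Fin n × Fin n) (Fin n × Fin n × Fin n) K := fun p p' =>
  M (p.1, p.2.2) (p'.1, p'.2.2) * (if p.2.1 = p'.2.1 then 1 else 0)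

/-- Place an operator on `V ⊗ V` in the tensor factors 2,3 of `V ⊗ V ⊗ V`. -/
def emb23 {n : ℕ} {K : Type*} [Field K]
    (M : Matrix (Fin n × Fin n) (Fin n × Fin n) K) :
    Matrix (Fin n × Fin n × Fin n) (Fin n × Fin n × Fin n) K := fun p p' =>
  M (p.2.1, p.2.2) (p'.2.1, p'.2.2) * (if p.1 = p'.1 then 1 else 0)

/-- Denominator-free R-matrix: `Tm = (q*(1-x)) • Rm`. -/
def Tm (n : ℕ) {K : Type*} [Field K] (q x : K) :
    Matrix (Fin n × Fin n) (Fin n × Fin n) K := fun p p' =>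
  (if p = p' then (if p.1 = p.2 then q ^ 2 - x else q * (1 - x)) else 0) +
  (if p.1 ≠ p.2 ∧ p'.1 = p.2 ∧ p'.2 = p.1 then
    (q ^ 2 - 1) * (if p.1 < p.2 then x else 1) else 0)

def dd {K : Type*} [Field K] (q x : K) {n : ℕ} (i j : Fin n) : K :=
  if i = j then q ^ 2 - x else q * (1 - x)

def oo {K : Type*} [Field K] (q x : K) {n : ℕ} (i j : Fin n) : K :=
  if i = j then 0 else (q ^ 2 - 1) * (if i < j then x else 1)

lemma Tm_apply {n : ℕ} {K : Type*} [Field K] (q x : K) (i j k l : Fin n) :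
    Tm n q x (i, j) (k, l) =
      (if k = i ∧ l = j then dd q x i j else 0) +
      (if k = j ∧ l = i then oo q x i j else 0) := by
  by_cases h : i = j <;>
    simp [Tm, dd, oo, Prod.ext_iff, h] <;> aesop

lemma emb12_mul {n : ℕ} {K : Type*} [Field K] (q x : K)
    (X : Matrix (Fin n × Fin n × Fin n) (Fin n × Fin n × Fin n) K)
    (i j k : Fin n) (r : Fin n × Fin n × Fin n) :
    (emb12 (Tm n q x) * X) (i, j, k) r =
      dd q x i j * X (i, j, k) r + oo q x i j * X (j, i, k) r := by
  simp [Matrix.mul_apply, emb12, Fintype.sum_prod_type, Tm_apply,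
    add_mul, ite_and, mul_ite, ite_mul, zero_mul, mul_zero,
    Finset.sum_add_distrib, Finset.sum_ite_eq, Finset.sum_ite_eq']

lemma emb13_mul {n : ℕ} {K : Type*} [Field K] (q x : K)
    (X : Matrix (Fin n × Fin n × Fin n) (Fin n × Fin n × Fin n) K)
    (i j k : Fin n) (r : Fin n × Fin n × Fin n) :
    (emb13 (Tm n q x) * X) (i, j, k) r =
      dd q x i k * X (i, j, k) r + oo q x i k * X (k, j, i) r := by
  simp [Matrix.mul_apply, emb13, Fintype.sum_prod_type, Tm_apply,
    add_mul, ite_and, mul_ite, ite_mul, zero_mul, mul_zero,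
    Finset.sum_add_distrib, Finset.sum_ite_eq, Finset.sum_ite_eq']

lemma emb23_apply {n : ℕ} {K : Type*} [Field K] (q x : K)
    (i j k : Fin n) (a b c : Fin n) :
    emb23 (Tm n q x) (i, j, k) (a, b, c) =
      (if a = i ∧ b = j ∧ c = k then dd q x j k else 0) +
      (if a = i ∧ b = k ∧ c = j then oo q x j k else 0) := by
  simp [emb23, Tm_apply, add_mul, ite_and, mul_ite, ite_mul, zero_mul, mul_zero]
  aesop

lemma emb23_mul {n : ℕ} {K : Type*} [Field K] (q x : K)
    (X : Matrix (Fin n × Fin n × Fin n) (Fin n × Fin n × Fin n) K)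
    (i j k : Fin n) (r : Fin n × Fin n × Fin n) :
    (emb23 (Tm n q x) * X) (i, j, k) r =
      dd q x j k * X (i, j, k) r + oo q x j k * X (i, k, j) r := by
  simp [Matrix.mul_apply, emb23, Fintype.sum_prod_type, Tm_apply,
    add_mul, ite_and, mul_ite, ite_mul, zero_mul, mul_zero,
    Finset.sum_add_distrib, Finset.sum_ite_eq, Finset.sum_ite_eq']

lemma emb12_apply {n : ℕ} {K : Type*} [Field K] (q x : K)
    (i j k : Fin n) (a b c : Fin n) :
    emb12 (Tm n q x) (i, j, k) (a, b, c) =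
      (if a = i ∧ b = j ∧ c = k then dd q x i j else 0) +
      (if a = j ∧ b = i ∧ c = k then oo q x i j else 0) := by
  simp [emb12, Tm_apply, add_mul, ite_and, mul_ite, ite_mul, zero_mul, mul_zero]
  aesop

lemma keyT (n : ℕ) (K : Type*) [Field K] (q u v : K) :
    emb12 (Tm n q u) * emb13 (Tm n q (u * v)) * emb23 (Tm n q v) =
    emb23 (Tm n q v) * emb13 (Tm n q (u * v)) * emb12 (Tm n q u) := by
  rw [Matrix.mul_assoc, Matrix.mul_assoc]
  ext ⟨i, j, k⟩ ⟨a, b, c⟩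
  rw [emb12_mul, emb23_mul, emb13_mul, emb13_mul, emb13_mul, emb13_mul,
      emb23_apply, emb23_apply, emb23_apply, emb23_apply,
      emb12_apply, emb12_apply, emb12_apply, emb12_apply]
  rcases lt_trichotomy i j with hij | rfl | hij
  · rcases lt_trichotomy j k with hjk | rfl | hjk
    · have hik : i < k := hij.trans hjk
      simp only [dd, oo, hij, hij.ne, hij.ne', lt_asymm hij, hjk, hjk.ne, hjk.ne', lt_asymm hjk, hik, hik.ne, hik.ne', lt_asymm hik, lt_irrefl, ite_true, ite_false, if_true, if_false, ne_eq, not_true, not_false_iff]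
      split_ifs <;>
        first
          | (exfalso; omega)
          | ring
    · skip
      simp only [dd, oo, hij, hij.ne, hij.ne', lt_asymm hij, lt_irrefl, ite_true, ite_false, if_true, if_false, ne_eq, not_true, not_false_iff]
      split_ifs <;>
        first
          | (exfalso; omega)
          | ring
    · rcases lt_trichotomy i k with hik | rfl | hik
      · skip
        simp only [dd, oo, hij, hij.ne, hij.ne', lt_asymm hij, hjk, hjk.ne, hjk.ne', lt_asymm hjk, hik, hik.ne, hik.ne', lt_asymm hik, lt_irrefl, ite_true, ite_false, if_true, if_false, ne_eq, not_true, not_false_iff]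
        split_ifs <;>
          first
            | (exfalso; omega)
            | ring
      · skip
        simp only [dd, oo, hij, hij.ne, hij.ne', lt_asymm hij, hjk, hjk.ne, hjk.ne', lt_asymm hjk, lt_irrefl, ite_true, ite_false, if_true, if_false, ne_eq, not_true, not_false_iff]
        split_ifs <;>
          first
            | (exfalso; omega)
            | ring
      · skip
        simp only [dd, oo, hij, hij.ne, hij.ne', lt_asymm hij, hjk, hjk.ne, hjk.ne', lt_asymm hjk, hik, hik.ne, hik.ne', lt_asymm hik, lt_irrefl, ite_true, ite_false, if_true, if_false, ne_eq, not_true, not_false_iff]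
        split_ifs <;>
          first
            | (exfalso; omega)
            | ring
  · rcases lt_trichotomy i k with hik | rfl | hik
    · skip
      simp only [dd, oo, hik, hik.ne, hik.ne', lt_asymm hik, lt_irrefl, ite_true, ite_false, if_true, if_false, ne_eq, not_true, not_false_iff]
      split_ifs <;>
        first
          | (exfalso; omega)
          | ring
    · skip
      simp only [dd, oo, lt_irrefl, ite_true, ite_false, if_true, if_false, ne_eq, not_true, not_false_iff]
      split_ifs <;>
        first
          | (exfalso; omega)
          | ring
    · skip
      simp only [dd, oo, hik, hik.ne, hik.ne', lt_asymm hik, lt_irrefl, ite_true, ite_false, if_true, if_false, ne_eq, not_true, not_false_iff]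
      split_ifs <;>
        first
          | (exfalso; omega)
          | ring
  · rcases lt_trichotomy j k with hjk | rfl | hjk
    · rcases lt_trichotomy i k with hik | rfl | hik
      · skip
        simp only [dd, oo, hij, hij.ne, hij.ne', lt_asymm hij, hjk, hjk.ne, hjk.ne', lt_asymm hjk, hik, hik.ne, hik.ne', lt_asymm hik, lt_irrefl, ite_true, ite_false, if_true, if_false, ne_eq, not_true, not_false_iff]
        split_ifs <;>
          first
            | (exfalso; omega)
            | ring
      · skip
        simp only [dd, oo, hij, hij.ne, hij.ne', lt_asymm hij, hjk, hjk.ne, hjk.ne', lt_asymm hjk, lt_irrefl, ite_true, ite_false, if_true, if_false, ne_eq, not_true, not_false_iff]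
        split_ifs <;>
          first
            | (exfalso; omega)
            | ring
      · skip
        simp only [dd, oo, hij, hij.ne, hij.ne', lt_asymm hij, hjk, hjk.ne, hjk.ne', lt_asymm hjk, hik, hik.ne, hik.ne', lt_asymm hik, lt_irrefl, ite_true, ite_false, if_true, if_false, ne_eq, not_true, not_false_iff]
        split_ifs <;>
          first
            | (exfalso; omega)
            | ring
    · skip
      simp only [dd, oo, hij, hij.ne, hij.ne', lt_asymm hij, lt_irrefl, ite_true, ite_false, if_true, if_false, ne_eq, not_true, not_false_iff]
      split_ifs <;>
        first
          | (exfalso; omega)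
          | ring
    · have hki : k < i := hjk.trans hij
      simp only [dd, oo, hij, hij.ne, hij.ne', lt_asymm hij, hjk, hjk.ne, hjk.ne', lt_asymm hjk, hki, hki.ne, hki.ne', lt_asymm hki, lt_irrefl, ite_true, ite_false, if_true, if_false, ne_eq, not_true, not_false_iff]
      split_ifs <;>
        first
          | (exfalso; omega)
          | ring

lemma Rm_eq_smul {n : ℕ} {K : Type*} [Field K] (q x : K) (hq : q ≠ 0)
    (hx : 1 - x ≠ 0) :
    Rm n q x = (q⁻¹ * (1 - x)⁻¹) • Tm n q x := by
  ext p p'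
  simp only [Rm, Tm, Matrix.smul_apply, smul_eq_mul, mul_add]
  split_ifs <;> (try field_simp) <;> first | ring1 | (left; ring1) | (right; ring1)

lemma emb12_smul {n : ℕ} {K : Type*} [Field K] (c : K)
    (M : Matrix (Fin n × Fin n) (Fin n × Fin n) K) :
    emb12 (c • M) = c • emb12 M := by
  ext p p'
  simp only [emb12, Matrix.smul_apply, smul_eq_mul]
  ring

lemma emb13_smul {n : ℕ} {K : Type*} [Field K] (c : K)
    (M : Matrix (Fin n × Fin n) (Fin n × Fin n) K) :
    emb13 (c • M) = c • emb13 M := by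
  ext p p'
  simp only [emb13, Matrix.smul_apply, smul_eq_mul]
  ring

lemma emb23_smul {n : ℕ} {K : Type*} [Field K] (c : K)
    (M : Matrix (Fin n × Fin n) (Fin n × Fin n) K) :
    emb23 (c • M) = c • emb23 M := by
  ext p p'
  simp only [emb23, Matrix.smul_apply, smul_eq_mul]
  ring

/-- Yang–Baxter equation with spectral parameters:
`R₁₂(z₁/z₂) R₁₃(z₁/z₃) R₂₃(z₂/z₃) = R₂₃(z₂/z₃) R₁₃(z₁/z₃) R₁₂(z₁/z₂)`. -/
theorem yang_baxter_spectral (n : ℕ) (K : Type*) [Field K] (q : K) (hq : q ≠ 0)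
    (z1 z2 z3 : K) (h1 : z1 ≠ 0) (h2 : z2 ≠ 0) (h3 : z3 ≠ 0)
    (h12 : z1 ≠ z2) (h13 : z1 ≠ z3) (h23 : z2 ≠ z3) :
    emb12 (Rm n q (z1 / z2)) * emb13 (Rm n q (z1 / z3)) * emb23 (Rm n q (z2 / z3)) =
    emb23 (Rm n q (z2 / z3)) * emb13 (Rm n q (z1 / z3)) * emb12 (Rm n q (z1 / z2)) := by
  have e12 : (1 : K) - z1 / z2 ≠ 0 :=
    sub_ne_zero.mpr fun h => h12 ((div_eq_one_iff_eq h2).mp h.symm)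
  have e13 : (1 : K) - z1 / z3 ≠ 0 :=
    sub_ne_zero.mpr fun h => h13 ((div_eq_one_iff_eq h3).mp h.symm)
  have e23 : (1 : K) - z2 / z3 ≠ 0 :=
    sub_ne_zero.mpr fun h => h23 ((div_eq_one_iff_eq h3).mp h.symm)
  have key : z1 / z3 = z1 / z2 * (z2 / z3) := by
    field_simp
  have e13' : (1 : K) - z1 / z2 * (z2 / z3) ≠ 0 := by rw [← key]; exact e13
  rw [key, Rm_eq_smul q _ hq e12, Rm_eq_smul q _ hq e13', Rm_eq_smul q _ hq e23,
    emb12_smul, emb13_smul, emb23_smul]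
  simp only [Matrix.smul_mul, Matrix.mul_smul, smul_smul]
  rw [keyT n K q (z1 / z2) (z2 / z3)]
  congr 1
  ring
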